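/- Let R be an integral domain, n ≥ 2, and let GC_n(R) denote the set of all invertible n×n Christoffel matrices over R. Then GC_n(R) is an abelian subgroup of GL_n(R): it is closed under products, closed under inverses, contains the identity matrix, and any two of its elements commute. -/

import Mathlib

/-- The `n × n` Christoffel matrix `C_m(a,b)`. -/
def christoffel (n m : ℕ) {R : Type*} (a b : R) : Matrix (Fin n) (Fin n) R :=
  Matrix.of fun i j =>
    if (((i : ℕ) : ZMod n) - (m : ZMod n) * ((j : ℕ) : ZMod n)).val < m then a else b

/-- A matrix is a Christoffel matrix if it equals `C_m(a,b)` for some `m` coprime to `n`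
and distinct `a, b`. -/
def IsChristoffel {R : Type*} (n : ℕ) (M : Matrix (Fin n) (Fin n) R) : Prop :=
  ∃ (m : ℕ) (a b : R), 1 ≤ m ∧ m < n ∧ Nat.Coprime m n ∧ a ≠ b ∧ M = christoffel n m a b

section Helpers

lemma count_mod (n : ℕ) (hn0 : 0 < n) (v : ℕ) (hv : v < n) (K : ℕ) :
    ((Finset.range K).filter (fun t => t % n = v)).card
      = K / n + if v < K % n then 1 else 0 := by
  induction K with
  | zero => simp
  | succ K ih =>
    rw [Finset.range_add_one, Finset.filter_insert]
    have hmodlt : K % n < n := Nat.mod_lt _ hn0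
    by_cases hc : K % n + 1 = n
    · have hK1 : K + 1 = n * (K / n + 1) := by
        have hd := Nat.div_add_mod K n; rw [Nat.mul_succ]; omega
      have hdiv : (K+1) / n = K / n + 1 := by rw [hK1, Nat.mul_div_cancel_left _ hn0]
      have hmod : (K+1) % n = 0 := by rw [hK1, Nat.mul_mod_right]
      by_cases h : K % n = v
      · rw [if_pos h, Finset.card_insert_of_notMem (by simp), ih, hdiv, hmod]
        have e1 : ¬ (v < K % n) := by omega
        simp [e1]
      · rw [if_neg h, ih, hdiv, hmod]
        have e1 : v < K % n := by omega
        simp [e1]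
    · have hK1 : K + 1 = (K % n + 1) + (K / n) * n := by
        have hd := Nat.mod_add_div' K n; omega
      have hdiv : (K+1) / n = K / n := by
        rw [hK1, Nat.add_mul_div_right _ _ hn0, Nat.div_eq_of_lt (by omega), Nat.zero_add]
      have hmod : (K+1) % n = K % n + 1 := by
        rw [hK1, Nat.add_mul_mod_self_right, Nat.mod_eq_of_lt (by omega)]
      by_cases h : K % n = v
      · rw [if_pos h, Finset.card_insert_of_notMem (by simp), ih, hdiv, hmod]
        have e1 : ¬ (v < K % n) := by omega
        have e2 : v < K % n + 1 := by omega
        simp [e1, e2]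
      · rw [if_neg h, ih, hdiv, hmod]
        by_cases e1 : v < K % n
        · have e2 : v < K % n + 1 := by omega
          simp [e1, e2]
        · have e2 : ¬ (v < K % n + 1) := by omega
          simp [e1, e2]

lemma cast_fin_bij (n : ℕ) [NeZero n] :
    Function.Bijective (fun k : Fin n => ((k : ℕ) : ZMod n)) := by
  constructor
  · intro k₁ k₂ h
    have h1 : (((k₁ : ℕ) : ZMod n)).val = (((k₂ : ℕ) : ZMod n)).val := congrArg ZMod.val h
    rwa [ZMod.val_cast_of_lt k₁.isLt, ZMod.val_cast_of_lt k₂.isLt, Fin.val_inj] at h1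
  · intro x
    exact ⟨⟨x.val, x.val_lt⟩, ZMod.natCast_rightInverse x⟩

lemma affine_bij {n : ℕ} [NeZero n] (c d : ZMod n) (hc : IsUnit c) :
    Function.Bijective (fun k : Fin n => d + c * ((k : ℕ) : ZMod n)) := by
  have h2 : Function.Bijective (fun x : ZMod n => d + c * x) := by
    constructor
    · intro x y h
      exact hc.mul_left_cancel (add_left_cancel h)
    · intro y
      refine ⟨↑hc.unit⁻¹ * (y - d), ?_⟩
      simp only [← mul_assoc, hc.mul_val_inv, one_mul]
      ring
  exact h2.comp (cast_fin_bij n)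

lemma sum_fin_affine {n : ℕ} [NeZero n] {M : Type*} [AddCommMonoid M]
    (c d : ZMod n) (hc : IsUnit c) (f : ZMod n → M) :
    ∑ k : Fin n, f (d + c * ((k : ℕ) : ZMod n)) = ∑ x : ZMod n, f x :=
  Fintype.sum_bijective _ (affine_bij c d hc) _ _ (fun _ => rfl)

lemma sum_zmod_ite {n m : ℕ} [NeZero n] {M : Type*} [AddCommMonoid M] (hm : m ≤ n) (α : M) :
    ∑ x : ZMod n, (if x.val < m then α else 0) = m • α := by
  rw [← Fintype.sum_bijective _ (cast_fin_bij n) _ (fun x : ZMod n => if x.val < m then α else 0)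
      (fun _ => rfl)]
  have h1 : ∀ k : Fin n, (if (((k:ℕ) : ZMod n)).val < m then α else 0)
      = if (k : ℕ) < m then α else 0 := by
    intro k; rw [ZMod.val_cast_of_lt k.isLt]
  simp_rw [h1]
  rw [Fin.sum_univ_eq_sum_range (fun t => if t < m then α else 0) n]
  rw [Finset.sum_ite, Finset.sum_const, Finset.sum_const, smul_zero, add_zero]
  congr 1
  rw [show Finset.filter (fun t => t < m) (Finset.range n) = Finset.range m from by
    ext t; simp; omega]
  exact Finset.card_range m

lemma card_affine {n m : ℕ} [NeZero n] (hm : m ≤ n) (c d : ZMod n) (hc : IsUnit c) :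
    (Finset.univ.filter (fun k : Fin n => (d + c * ((k:ℕ):ZMod n)).val < m)).card = m := by
  rw [Finset.card_filter,
    sum_fin_affine c d hc (fun x : ZMod n => if x.val < m then (1:ℕ) else 0),
    sum_zmod_ite hm]
  simp

lemma sum_sub_ite {n m : ℕ} [NeZero n] {M : Type*} [AddCommMonoid M]
    (hm : m ≤ n) (c w : ZMod n) (hc : IsUnit c) (α : M) :
    ∑ k : Fin n, (if (w - c * ((k:ℕ):ZMod n)).val < m then α else 0) = m • α := by
  have h := sum_fin_affine (-c) w hc.neg (fun x : ZMod n => if x.val < m then α else 0)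
  simp only [neg_mul, ← sub_eq_add_neg] at h
  rw [h, sum_zmod_ite hm]

lemma sum_sub_ite' {n m : ℕ} [NeZero n] {M : Type*} [AddCommMonoid M]
    (hm : m ≤ n) (w : ZMod n) (α : M) :
    ∑ k : Fin n, (if (((k:ℕ):ZMod n) - w).val < m then α else 0) = m • α := by
  have h := sum_fin_affine 1 (-w) isUnit_one (fun x : ZMod n => if x.val < m then α else 0)
  simp only [one_mul, neg_add_eq_sub] at h
  rw [h, sum_zmod_ite hm]

lemma card_double {n m m' : ℕ} [NeZero n] (hm1 : 1 ≤ m) (hm2 : m ≤ n)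
    (hm'1 : 1 ≤ m') (hm'2 : m' ≤ n) (w1 w2 : ZMod n) :
    (Finset.univ.filter (fun k : Fin n =>
        (w1 - (m : ZMod n) * ((k:ℕ):ZMod n)).val < m ∧ (((k:ℕ):ZMod n) - w2).val < m')).card
      = m * m' / n + if (w1 - (m:ZMod n) * w2).val < m * m' % n then 1 else 0 := by
  have npos : 0 < n := Nat.pos_of_ne_zero (NeZero.ne n)
  set w : ZMod n := w1 - (m:ZMod n) * w2 with hw
  rw [← count_mod n npos w.val (ZMod.val_lt w) (m * m')]
  refine Finset.card_bij'
    (fun k _ => m * (((k:ℕ):ZMod n) - w2).val + (w1 - (m : ZMod n) * ((k:ℕ):ZMod n)).val)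
    (fun t _ => (⟨(w2 + ((t / m : ℕ) : ZMod n)).val, ZMod.val_lt _⟩ : Fin n)) ?_ ?_ ?_ ?_
  · -- i maps into t
    intro k hk
    rw [Finset.mem_filter] at hk
    obtain ⟨-, hr, hu⟩ := hk
    set u := (((k:ℕ):ZMod n) - w2).val with hudef
    set r := (w1 - (m : ZMod n) * ((k:ℕ):ZMod n)).val with hrdef
    rw [Finset.mem_filter, Finset.mem_range]
    constructor
    · calc m * u + r < m * u + m := by omega
        _ = m * (u + 1) := by ring
        _ ≤ m * m' := Nat.mul_le_mul_left m (by omega)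
    · have hcast : ((m * u + r : ℕ) : ZMod n) = w := by
        push_cast
        rw [hudef, hrdef, ZMod.natCast_rightInverse _, ZMod.natCast_rightInverse _, hw]
        ring
      rw [← ZMod.val_natCast, hcast]
  · -- j maps into s
    intro t ht
    rw [Finset.mem_filter, Finset.mem_range] at ht
    obtain ⟨hlt, hmod⟩ := ht
    have hu : t / m < m' := (Nat.div_lt_iff_lt_mul (by omega)).2 (by rw [Nat.mul_comm]; omega)
    have hr : t % m < m := Nat.mod_lt _ (by omega)
    rw [Finset.mem_filter]
    have hk : (((⟨(w2 + ((t / m : ℕ) : ZMod n)).val, ZMod.val_lt _⟩ : Fin n) : ℕ) : ZMod n)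
        = w2 + ((t / m : ℕ) : ZMod n) := ZMod.natCast_rightInverse _
    have hwt : w = ((t : ℕ) : ZMod n) := by
      rw [← ZMod.natCast_rightInverse w, ← hmod, ZMod.natCast_mod]
    have ht' : ((t : ℕ) : ZMod n) = ↑m * ↑(t/m) + ↑(t%m) := by
      conv_lhs => rw [← Nat.div_add_mod t m]
      push_cast
      ring
    refine ⟨Finset.mem_univ _, ?_, ?_⟩
    · rw [hk]
      have key : w1 - ↑m * (w2 + ((t / m : ℕ) : ZMod n)) = ((t % m : ℕ) : ZMod n) := by
        calc w1 - ↑m * (w2 + ((t / m : ℕ) : ZMod n)) = w - ↑m * ↑(t/m) := by rw [hw]; ring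
          _ = ((t:ℕ) : ZMod n) - ↑m * ↑(t/m) := by rw [hwt]
          _ = ((t % m : ℕ) : ZMod n) := by rw [ht']; ring
      rw [key, ZMod.val_natCast, Nat.mod_eq_of_lt (lt_of_lt_of_le hr hm2)]
      exact hr
    · rw [hk]
      have key : w2 + ((t / m : ℕ) : ZMod n) - w2 = ((t / m : ℕ) : ZMod n) := by ring
      rw [key, ZMod.val_natCast, Nat.mod_eq_of_lt (lt_of_lt_of_le hu hm'2)]
      exact hu
  · -- left inverse
    intro k hk
    rw [Finset.mem_filter] at hk
    obtain ⟨-, hP1, hP2⟩ := hk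
    set u := (((k:ℕ):ZMod n) - w2).val with hudef
    set r := (w1 - (m : ZMod n) * ((k:ℕ):ZMod n)).val with hrdef
    have hdiv : (m * u + r) / m = u := by
      rw [Nat.mul_add_div (by omega), Nat.div_eq_of_lt hP1, Nat.add_zero]
    apply Fin.ext
    simp only [hdiv]
    rw [show w2 + ((u:ℕ):ZMod n) = ((k:ℕ):ZMod n) from by
      rw [hudef, ZMod.natCast_rightInverse]; ring]
    rw [ZMod.val_cast_of_lt k.isLt]
  · -- right inverse
    intro t ht
    rw [Finset.mem_filter, Finset.mem_range] at ht
    obtain ⟨hlt, hmod⟩ := ht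
    have hu : t / m < m' := (Nat.div_lt_iff_lt_mul (by omega)).2 (by rw [Nat.mul_comm]; omega)
    have hr : t % m < m := Nat.mod_lt _ (by omega)
    have hk : (((⟨(w2 + ((t / m : ℕ) : ZMod n)).val, ZMod.val_lt _⟩ : Fin n) : ℕ) : ZMod n)
        = w2 + ((t / m : ℕ) : ZMod n) := ZMod.natCast_rightInverse _
    have hwt : w = ((t : ℕ) : ZMod n) := by
      rw [← ZMod.natCast_rightInverse w, ← hmod, ZMod.natCast_mod]
    have ht' : ((t : ℕ) : ZMod n) = ↑m * ↑(t/m) + ↑(t%m) := by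
      conv_lhs => rw [← Nat.div_add_mod t m]
      push_cast
      ring
    simp only [hk]
    have key2 : w2 + ((t / m : ℕ) : ZMod n) - w2 = ((t / m : ℕ) : ZMod n) := by ring
    have key1 : w1 - ↑m * (w2 + ((t / m : ℕ) : ZMod n)) = ((t % m : ℕ) : ZMod n) := by
      calc w1 - ↑m * (w2 + ((t / m : ℕ) : ZMod n)) = w - ↑m * ↑(t/m) := by rw [hw]; ring
        _ = ((t:ℕ) : ZMod n) - ↑m * ↑(t/m) := by rw [hwt]
        _ = ((t % m : ℕ) : ZMod n) := by rw [ht']; ring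
    rw [key2, key1, ZMod.val_natCast, ZMod.val_natCast,
      Nat.mod_eq_of_lt (lt_of_lt_of_le hu hm'2), Nat.mod_eq_of_lt (lt_of_lt_of_le hr hm2)]
    exact Nat.div_add_mod t m

lemma sum_ite_card {ι : Type*} {M : Type*} [AddCommMonoid M] (s : Finset ι) (p : ι → Prop)
    [DecidablePred p] (c : M) :
    ∑ x ∈ s, (if p x then c else 0) = (s.filter p).card • c := by
  rw [← Finset.sum_filter, Finset.sum_const]

lemma christoffel_mul {R : Type*} [CommRing R] {n m m' : ℕ} (hn : 2 ≤ n)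
    (hm1 : 1 ≤ m) (hm2 : m < n) (hmc : Nat.Coprime m n)
    (hm'1 : 1 ≤ m') (hm'2 : m' < n) (a b a' b' : R) :
    christoffel n m a b * christoffel n m' a' b' =
      christoffel n (m * m' % n)
        ((n:R)*(b*b') + (m':R)*(b*(a'-b')) + (m:R)*(b'*(a-b))
          + (a-b)*((a'-b')*((m*m'/n : ℕ) + 1)))
        ((n:R)*(b*b') + (m':R)*(b*(a'-b')) + (m:R)*(b'*(a-b))
          + (a-b)*((a'-b')*(m*m'/n : ℕ))) := by
  haveI : NeZero n := ⟨by omega⟩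
  have hmu : IsUnit ((m : ZMod n)) := ⟨ZMod.unitOfCoprime m hmc, ZMod.coe_unitOfCoprime m hmc⟩
  ext i j
  rw [Matrix.mul_apply]
  unfold christoffel
  simp only [Matrix.of_apply]
  have key : ∀ k : Fin n,
      (if (((i:ℕ):ZMod n) - (m:ZMod n) * ((k:ℕ):ZMod n)).val < m then a else b) *
      (if (((k:ℕ):ZMod n) - (m':ZMod n) * ((j:ℕ):ZMod n)).val < m' then a' else b') =
      b*b' + ((if (((k:ℕ):ZMod n) - (m':ZMod n) * ((j:ℕ):ZMod n)).val < m' then b*(a'-b') else 0)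
           + ((if (((i:ℕ):ZMod n) - (m:ZMod n) * ((k:ℕ):ZMod n)).val < m then b'*(a-b) else 0)
           + (if ((((i:ℕ):ZMod n) - (m:ZMod n) * ((k:ℕ):ZMod n)).val < m ∧
                  (((k:ℕ):ZMod n) - (m':ZMod n) * ((j:ℕ):ZMod n)).val < m')
              then (a-b)*(a'-b') else 0))) := by
    intro k
    by_cases h1 : (((i:ℕ):ZMod n) - (m:ZMod n) * ((k:ℕ):ZMod n)).val < m <;>
      by_cases h2 : (((k:ℕ):ZMod n) - (m':ZMod n) * ((j:ℕ):ZMod n)).val < m' <;>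
      simp [h1, h2] <;> ring
  simp_rw [key]
  rw [Finset.sum_add_distrib, Finset.sum_add_distrib, Finset.sum_add_distrib,
    Finset.sum_const, Finset.card_univ, Fintype.card_fin,
    sum_sub_ite' (by omega) ((m':ZMod n) * ((j:ℕ):ZMod n)) (b*(a'-b')),
    sum_sub_ite (by omega) ((m:ZMod n)) (((i:ℕ):ZMod n)) hmu (b'*(a-b)),
    sum_ite_card, card_double hm1 (by omega) hm'1 (by omega)]
  have hcast : (((m * m' % n : ℕ)) : ZMod n) = (m : ZMod n) * (m' : ZMod n) := by
    rw [ZMod.natCast_mod]; push_cast; ring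
  rw [show ((i:ℕ):ZMod n) - ((m * m' % n : ℕ) : ZMod n) * ((j:ℕ):ZMod n)
      = ((i:ℕ):ZMod n) - (m:ZMod n) * ((m':ZMod n) * ((j:ℕ):ZMod n)) from by rw [hcast]; ring]
  simp only [nsmul_eq_mul]
  push_cast
  split_ifs <;> ring

lemma christoffel_one {R : Type*} [CommRing R] {n : ℕ} (hn : 2 ≤ n) :
    christoffel n 1 (1:R) 0 = 1 := by
  haveI : NeZero n := ⟨by omega⟩
  ext i j
  unfold christoffel
  simp only [Matrix.of_apply, Nat.cast_one, one_mul, Matrix.one_apply]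
  by_cases h : i = j
  · subst h; simp
  · have hc : ¬ ((((i:ℕ):ZMod n) - ((j:ℕ):ZMod n)).val < 1) := by
      intro hlt
      have h0 : (((i:ℕ):ZMod n) - ((j:ℕ):ZMod n)) = 0 :=
        (ZMod.val_eq_zero _).mp (Nat.lt_one_iff.mp hlt)
      apply h
      have heq : ((i:ℕ):ZMod n) = ((j:ℕ):ZMod n) := sub_eq_zero.mp h0
      have hv := congrArg ZMod.val heq
      rwa [ZMod.val_cast_of_lt i.isLt, ZMod.val_cast_of_lt j.isLt, Fin.val_inj] at hv
    rw [if_neg hc, if_neg h]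

lemma isUnit_sub_of_det {R : Type*} [CommRing R] {n m : ℕ} (hn : 2 ≤ n) (a b : R)
    (hdet : IsUnit (christoffel n m a b).det) : IsUnit (a - b) := by
  rw [← Ideal.span_singleton_eq_top]
  set I := Ideal.span {a - b} with hI
  let φ := Ideal.Quotient.mk I
  have hmap : IsUnit ((φ.mapMatrix (christoffel n m a b)).det) := by
    rw [← RingHom.map_det]; exact hdet.map φ
  have hab : φ a = φ b := by
    rw [Ideal.Quotient.mk_eq_mk_iff_sub_mem]
    exact Ideal.subset_span rfl
  have heq : φ.mapMatrix (christoffel n m a b)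
      = Matrix.of (fun _ _ : Fin n => φ b) := by
    ext i j
    simp only [RingHom.mapMatrix_apply, Matrix.map_apply, christoffel, Matrix.of_apply]
    split_ifs <;> simp [hab]
  have hzero : (Matrix.of (fun _ _ : Fin n => φ b)).det = 0 :=
    Matrix.det_zero_of_row_eq (i := (⟨0, by omega⟩ : Fin n)) (j := ⟨1, by omega⟩)
      (by simp [Fin.ext_iff]) rfl
  rw [heq, hzero] at hmap
  have h01 : (0 : R ⧸ I) = 1 := isUnit_zero_iff.mp hmap
  rw [Ideal.eq_top_iff_one]
  apply Ideal.Quotient.eq_zero_iff_mem.mp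
  rw [map_one, ← h01]

lemma isUnit_sigma {R : Type*} [CommRing R] {n m : ℕ} (hn : 2 ≤ n) (hm2 : m ≤ n)
    (hmc : Nat.Coprime m n) (a b : R)
    (hdet : IsUnit (christoffel n m a b).det) : IsUnit ((n:R)*b + (m:R)*(a-b)) := by
  haveI : NeZero n := ⟨by omega⟩
  have hmu : IsUnit ((m : ZMod n)) := ⟨ZMod.unitOfCoprime m hmc, ZMod.coe_unitOfCoprime m hmc⟩
  have hrow : ∀ i : Fin n, ∑ j, christoffel n m a b i j = (n:R)*b + (m:R)*(a-b) := by
    intro i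
    have key : ∀ j : Fin n, christoffel n m a b i j
        = b + (if (((i:ℕ):ZMod n) - (m:ZMod n)*((j:ℕ):ZMod n)).val < m then (a-b) else 0) := by
      intro j
      simp only [christoffel, Matrix.of_apply]
      split_ifs <;> ring
    simp_rw [key]
    rw [Finset.sum_add_distrib, Finset.sum_const, Finset.card_univ, Fintype.card_fin,
      sum_sub_ite hm2 _ _ hmu (a-b)]
    simp only [nsmul_eq_mul]
  have hv : (christoffel n m a b).mulVec (fun _ => 1) = fun _ => (n:R)*b + (m:R)*(a-b) := by
    funext i
    simp only [Matrix.mulVec, dotProduct, mul_one]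
    exact hrow i
  have h1 : ((christoffel n m a b).adjugate * christoffel n m a b).mulVec (fun _ => 1)
      = (christoffel n m a b).det • (fun _ => (1:R)) := by
    rw [Matrix.adjugate_mul, Matrix.smul_mulVec, Matrix.one_mulVec]
  rw [← Matrix.mulVec_mulVec, hv] at h1
  have h2 : (christoffel n m a b).adjugate.mulVec (fun _ => (n:R)*b + (m:R)*(a-b))
      = ((n:R)*b + (m:R)*(a-b)) • (christoffel n m a b).adjugate.mulVec (fun _ => 1) := by
    have hfun : (fun _ : Fin n => (n:R)*b + (m:R)*(a-b))
        = ((n:R)*b + (m:R)*(a-b)) • (fun _ : Fin n => (1:R)) := by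
      funext x
      simp only [Pi.smul_apply, smul_eq_mul, mul_one]
    rw [hfun, Matrix.mulVec_smul]
  rw [h2] at h1
  have h3 := congrFun h1 (⟨0, by omega⟩ : Fin n)
  simp only [Pi.smul_apply, smul_eq_mul, mul_one] at h3
  rw [← h3] at hdet
  exact isUnit_of_mul_isUnit_left hdet

end Helpers

theorem christoffel_group (R : Type*) [CommRing R] [IsDomain R] (n : ℕ) (hn : 2 ≤ n) :
    let S : Set (Matrix (Fin n) (Fin n) R) := {A | IsChristoffel n A ∧ IsUnit A.det}
    (1 : Matrix (Fin n) (Fin n) R) ∈ S ∧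
    (∀ A ∈ S, ∀ B ∈ S, A * B ∈ S) ∧
    (∀ A ∈ S, A⁻¹ ∈ S) ∧
    (∀ A ∈ S, ∀ B ∈ S, A * B = B * A) := by
  intro S
  haveI : NeZero n := ⟨by omega⟩
  haveI : Fact (1 < n) := ⟨by omega⟩
  refine ⟨?_, ?_, ?_, ?_⟩
  · -- identity
    refine ⟨⟨1, 1, 0, le_refl 1, by omega, Nat.coprime_one_left n, one_ne_zero,
      (christoffel_one hn).symm⟩, by simp⟩
  · -- products
    rintro A ⟨⟨m, a, b, hm1, hm2, hmc, hab, rfl⟩, hdA⟩ B ⟨⟨m', a', b', hm'1, hm'2, hmc', hab', rfl⟩, hdB⟩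
    refine ⟨?_, by rw [Matrix.det_mul]; exact hdA.mul hdB⟩
    rw [christoffel_mul hn hm1 hm2 hmc hm'1 hm'2]
    have hcop : Nat.Coprime (m * m' % n) n := by
      have h1 : Nat.Coprime (m*m') n := hmc.mul hmc'
      unfold Nat.Coprime at *
      rw [← Nat.gcd_rec, Nat.gcd_comm]
      exact h1
    refine ⟨m*m' % n, _, _, ?_, Nat.mod_lt _ (by omega), hcop, ?_, rfl⟩
    · rcases Nat.eq_zero_or_pos (m*m'%n) with h | h
      · exfalso
        rw [h, Nat.coprime_zero_left] at hcop
        omega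
      · exact h
    · intro heq
      have h0 : (a-b)*(a'-b') = 0 := by linear_combination heq
      exact (mul_ne_zero (sub_ne_zero.2 hab) (sub_ne_zero.2 hab')) h0
  · -- inverses
    rintro A ⟨⟨m, a, b, hm1, hm2, hmc, hab, rfl⟩, hdet⟩
    set u : (ZMod n)ˣ := ZMod.unitOfCoprime m hmc with hu
    set ms : ℕ := ((u⁻¹ : (ZMod n)ˣ) : ZMod n).val with hms
    have hmscast : ((ms : ℕ) : ZMod n) = ((u⁻¹ : (ZMod n)ˣ) : ZMod n) :=
      ZMod.natCast_rightInverse _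
    have hms_lt : ms < n := ZMod.val_lt _
    have hms_cop : Nat.Coprime ms n := ZMod.val_coe_unit_coprime u⁻¹
    have hms_pos : 1 ≤ ms := by
      rcases Nat.eq_zero_or_pos ms with h | h
      · exfalso
        have h0 : ((u⁻¹ : (ZMod n)ˣ) : ZMod n) = 0 := (ZMod.val_eq_zero _).mp h
        exact Units.ne_zero u⁻¹ h0
      · exact h
    have hmod1 : m * ms % n = 1 := by
      have hc : ((m * ms : ℕ) : ZMod n) = ((1:ℕ) : ZMod n) := by
        push_cast
        rw [hmscast, ← ZMod.coe_unitOfCoprime m hmc, ← hu, ← Units.val_mul, mul_inv_cancel,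
          Units.val_one]
      have h1 : m * ms % n = 1 % n := (ZMod.natCast_eq_natCast_iff _ _ _).mp hc
      rwa [show 1 % n = 1 from Nat.mod_eq_of_lt (by omega)] at h1
    have hα : IsUnit (a-b) := isUnit_sub_of_det hn a b hdet
    have hσ : IsUnit ((n:R)*b + (m:R)*(a-b)) := isUnit_sigma hn (by omega) hmc a b hdet
    have e1 : (a-b) * (↑hα.unit⁻¹ : R) = 1 := hα.mul_val_inv
    have e2 : ((n:R)*b + (m:R)*(a-b)) * (↑hσ.unit⁻¹ : R) = 1 := hσ.mul_val_inv
    have hprod : christoffel n m a b *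
        christoffel n ms
          ((↑hα.unit⁻¹ : R) + (-(↑hσ.unit⁻¹ : R) * ((ms:R) * b * (↑hα.unit⁻¹ : R) + ((m*ms/n : ℕ):R))))
          (-(↑hσ.unit⁻¹ : R) * ((ms:R) * b * (↑hα.unit⁻¹ : R) + ((m*ms/n : ℕ):R))) = 1 := by
      rw [christoffel_mul hn hm1 hm2 hmc hms_pos hms_lt, hmod1,
        show (1 : Matrix (Fin n) (Fin n) R) = christoffel n 1 1 0 from (christoffel_one hn).symm]
      refine congrArg₂ (christoffel n 1) ?_ ?_
      · linear_combination (-(ms:R)*b*(↑hα.unit⁻¹ : R) - ((m*ms/n : ℕ):R)) * e2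
          + (((m*ms/n : ℕ):R)+1) * e1
      · linear_combination (-(ms:R)*b*(↑hα.unit⁻¹ : R) - ((m*ms/n : ℕ):R)) * e2
          + ((m*ms/n : ℕ):R) * e1
    have hinv := Matrix.inv_eq_right_inv hprod
    have hdetB : IsUnit (christoffel n ms
        ((↑hα.unit⁻¹ : R) + (-(↑hσ.unit⁻¹ : R) * ((ms:R) * b * (↑hα.unit⁻¹ : R) + ((m*ms/n : ℕ):R))))
        (-(↑hσ.unit⁻¹ : R) * ((ms:R) * b * (↑hα.unit⁻¹ : R) + ((m*ms/n : ℕ):R)))).det := by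
      apply IsUnit.of_mul_eq_one (christoffel n m a b).det
      rw [mul_comm, ← Matrix.det_mul, hprod, Matrix.det_one]
    refine ⟨⟨ms, _, _, hms_pos, hms_lt, hms_cop, ?_, hinv⟩, by rw [hinv]; exact hdetB⟩
    intro h
    have h0 : (↑hα.unit⁻¹ : R) = 0 := by linear_combination h
    exact Units.ne_zero hα.unit⁻¹ h0
  · -- commutativity
    rintro A ⟨⟨m, a, b, hm1, hm2, hmc, hab, rfl⟩, -⟩ B ⟨⟨m', a', b', hm'1, hm'2, hmc', hab', rfl⟩, -⟩
    rw [christoffel_mul hn hm1 hm2 hmc hm'1 hm'2, christoffel_mul hn hm'1 hm'2 hmc' hm1 hm2,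
      Nat.mul_comm m' m]
    exact congrArg₂ (christoffel n (m * m' % n)) (by push_cast; ring) (by push_cast; ring)
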